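/- Assume (H1) and (H3). If u* and v* are both amenable complete trajectories at the same point q ∈ Q, then V(u*(t) − v*(t)) ≤ 0 for every t ∈ ℝ, where V(u) := (Pu,u). -/

import Mathlib

open MeasureTheory Set Bornology Filter Topology RealInnerProductSpace

noncomputable section

variable {Q H : Type*}

section Defs
variable [MetricSpace Q] [NormedAddCommGroup H] [InnerProductSpace ℝ H] [CompleteSpace H]

def IsFlow (ϑ : ℝ → Q → Q) : Prop :=
  (∀ q, ϑ 0 q = q) ∧ (∀ t s q, ϑ (t + s) q = ϑ t (ϑ s q)) ∧
    Continuous fun p : ℝ × Q => ϑ p.1 p.2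

def IsCocycle (ϑ : ℝ → Q → Q) (ψ : ℝ → Q → H → H) : Prop :=
  (∀ q u, ψ 0 q u = u) ∧
  (∀ t s : ℝ, 0 ≤ t → 0 ≤ s → ∀ q u, ψ (t + s) q u = ψ t (ϑ s q) (ψ s q u)) ∧
  ContinuousOn (fun p : ℝ × Q × H => ψ p.1 p.2.1 p.2.2) {p : ℝ × Q × H | 0 ≤ p.1}

def IsCompleteTraj (ϑ : ℝ → Q → Q) (ψ : ℝ → Q → H → H) (q : Q) (u : ℝ → H) : Prop :=
  Continuous u ∧ ∀ t s : ℝ, 0 ≤ t → u (t + s) = ψ t (ϑ s q) (u s)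

def IsAmenable (ν : ℝ) (u : ℝ → H) : Prop :=
  IntegrableOn (fun s : ℝ => Real.exp (2 * ν * s) * ‖u s‖ ^ 2) (Set.Iic (0:ℝ))

def amenSet (ϑ : ℝ → Q → Q) (ψ : ℝ → Q → H → H) (ν : ℝ) (q : Q) : Set H :=
  {u₀ | ∃ u : ℝ → H, IsCompleteTraj ϑ ψ q u ∧ IsAmenable ν u ∧ u 0 = u₀}

structure HypH1 (P : H →L[ℝ] H) (Hplus Hminus : Submodule ℝ H) : Prop where
  selfAdj : IsSelfAdjoint P
  closed_plus : IsClosed (Hplus : Set H)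
  orth : Hminus = Hplusᗮ
  inv_plus : ∀ u ∈ Hplus, P u ∈ Hplus
  inv_minus : ∀ u ∈ Hminus, P u ∈ Hminus
  pos : ∀ u ∈ Hplus, u ≠ 0 → (0:ℝ) < ⟪P u, u⟫
  neg : ∀ u ∈ Hminus, u ≠ 0 → ⟪P u, u⟫ < 0

def HypH2 (Hminus : Submodule ℝ H) (j : ℕ) : Prop :=
  FiniteDimensional ℝ Hminus ∧ Module.finrank ℝ Hminus = j

def HypH3 (ψ : ℝ → Q → H → H) (P : H →L[ℝ] H) (δ ν : ℝ) : Prop :=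
  0 < δ ∧ 0 < ν ∧ ∀ (q : Q) (u v : H) (l r : ℝ), 0 ≤ l → l ≤ r →
    Real.exp (2 * ν * r) * ⟪P (ψ r q u - ψ r q v), ψ r q u - ψ r q v⟫ -
      Real.exp (2 * ν * l) * ⟪P (ψ l q u - ψ l q v), ψ l q u - ψ l q v⟫ ≤
      -δ * ∫ s in l..r, Real.exp (2 * ν * s) * ‖ψ s q u - ψ s q v‖ ^ 2

def IsOrthProjOnto (Hminus : Submodule ℝ H) (Pi : H →L[ℝ] H) : Prop :=
  (∀ u, Pi u ∈ Hminus) ∧ ∀ u, u - Pi u ∈ Hminusᗮ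

def HypCOM2 (ψ : ℝ → Q → H → H) : Prop :=
  ∃ tc : ℝ, 0 < tc ∧ ∀ (q : Q) (s : Set H), IsBounded s → IsCompact (closure (ψ tc q '' s))

def HypCOM3 (ψ : ℝ → Q → H → H) : Prop :=
  ∀ (q : Q) (u₀ : H), IsBounded ((fun t => ψ t q u₀) '' Set.Ici (0:ℝ)) →
    IsCompact (closure ((fun t => ψ t q u₀) '' Set.Ici (0:ℝ)))

def LyapunovStable (ψ : ℝ → Q → H → H) (q : Q) (v : ℝ → H) : Prop :=
  ∀ ε > 0, ∃ η > 0, ∀ u₀ : H, ‖u₀ - v 0‖ < η → ∀ t ≥ 0, ‖ψ t q u₀ - v t‖ < ε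

end Defs

def circleFlow (σ : ℝ) : ℝ → AddCircle σ → AddCircle σ := fun t θ => θ + (t : AddCircle σ)

/-- Lemma 1, item 1: under (H1) and (H3), if `u*` and `v*` are amenable complete
trajectories at the same `q`, then `V(u*(t) − v*(t)) ≤ 0` for all `t`. -/
theorem amenable_trajectories_nonpositive_V
    {Q H : Type*} [MetricSpace Q] [NormedAddCommGroup H] [InnerProductSpace ℝ H]
    [CompleteSpace H] [TopologicalSpace.SeparableSpace H]
    (ϑ : ℝ → Q → Q) (ψ : ℝ → Q → H → H)
    (hflow : IsFlow ϑ) (hcoc : IsCocycle ϑ ψ)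
    (P : H →L[ℝ] H) (Hplus Hminus : Submodule ℝ H)
    (h1 : HypH1 P Hplus Hminus)
    (δ ν : ℝ) (h3 : HypH3 ψ P δ ν)
    (q : Q) (u v : ℝ → H)
    (hu : IsCompleteTraj ϑ ψ q u) (hua : IsAmenable ν u)
    (hv : IsCompleteTraj ϑ ψ q v) (hva : IsAmenable ν v) :
    ∀ t : ℝ, ⟪P (u t - v t), u t - v t⟫ ≤ 0 := by
  obtain ⟨hδ, hν, h3'⟩ := h3
  intro t
  set w : ℝ → H := fun s => u s - v s with hw
  -- Step 1: monotonicity of s ↦ exp(2νs) V(w s)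
  have key : ∀ s, s ≤ t → Real.exp (2*ν*t) * ⟪P (w t), w t⟫ ≤
      Real.exp (2*ν*s) * ⟪P (w s), w s⟫ := by
    intro s hs
    have h0 : (0:ℝ) ≤ t - s := by linarith
    have H3 := h3' (ϑ s q) (u s) (v s) 0 (t - s) le_rfl h0
    have hut : ψ (t - s) (ϑ s q) (u s) = u t := by
      have := hu.2 (t - s) s h0; rw [sub_add_cancel] at this; exact this.symm
    have hvt : ψ (t - s) (ϑ s q) (v s) = v t := by
      have := hv.2 (t - s) s h0; rw [sub_add_cancel] at this; exact this.symm
    have hu0 : ψ 0 (ϑ s q) (u s) = u s := hcoc.1 _ _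
    have hv0 : ψ 0 (ϑ s q) (v s) = v s := hcoc.1 _ _
    rw [hut, hvt, hu0, hv0] at H3
    have hintn : 0 ≤ ∫ σ in (0:ℝ)..(t-s),
        Real.exp (2*ν*σ) * ‖ψ σ (ϑ s q) (u s) - ψ σ (ϑ s q) (v s)‖^2 :=
      intervalIntegral.integral_nonneg h0 (fun σ _ => by positivity)
    have h4 : Real.exp (2*ν*(t-s)) * ⟪P (w t), w t⟫ ≤
        Real.exp (2*ν*0) * ⟪P (w s), w s⟫ := by nlinarith
    have he : (0:ℝ) < Real.exp (2*ν*s) := Real.exp_pos _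
    have hcomb : Real.exp (2*ν*s) * Real.exp (2*ν*(t-s)) = Real.exp (2*ν*t) := by
      rw [← Real.exp_add]; ring_nf
    calc Real.exp (2*ν*t) * ⟪P (w t), w t⟫
        = Real.exp (2*ν*s) * (Real.exp (2*ν*(t-s)) * ⟪P (w t), w t⟫) := by
          rw [← mul_assoc, hcomb]
      _ ≤ Real.exp (2*ν*s) * (Real.exp (2*ν*0) * ⟪P (w s), w s⟫) :=
          mul_le_mul_of_nonneg_left h4 he.le
      _ = Real.exp (2*ν*s) * ⟪P (w s), w s⟫ := by
          norm_num
  -- Step 2: integrability of exp(2νs)‖w s‖²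
  have hwc : Continuous w := hu.1.sub hv.1
  have hcont : Continuous fun s => Real.exp (2*ν*s) * ‖w s‖^2 := by fun_prop
  have hint : IntegrableOn (fun s => Real.exp (2*ν*s) * ‖w s‖^2) (Iic (0:ℝ)) := by
    have hg : IntegrableOn
        (fun s => 2*(Real.exp (2*ν*s)*‖u s‖^2 + Real.exp (2*ν*s)*‖v s‖^2)) (Iic (0:ℝ)) :=
      (hua.add hva).const_mul 2
    refine hg.mono' hcont.aestronglyMeasurable.restrict (ae_of_all _ fun s => ?_)
    rw [Real.norm_eq_abs, abs_of_nonneg (by positivity)]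
    have h1 : ‖w s‖ ≤ ‖u s‖ + ‖v s‖ := norm_sub_le _ _
    have h2 : ‖w s‖^2 ≤ 2*‖u s‖^2 + 2*‖v s‖^2 := by
      nlinarith [norm_nonneg (u s), norm_nonneg (v s), norm_nonneg (w s),
        sq_nonneg (‖u s‖ - ‖v s‖)]
    nlinarith [mul_le_mul_of_nonneg_left h2 (Real.exp_pos (2*ν*s)).le]
  -- Step 3: values get arbitrarily small as s → −∞
  have hsmall : ∀ ε > (0:ℝ), ∃ s ≤ t, Real.exp (2*ν*s) * ‖w s‖^2 < ε := by
    intro ε hε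
    by_contra hcon
    push_neg at hcon
    have hsub : Iic (min t 0) ⊆ Iic (0:ℝ) := Iic_subset_Iic.2 (min_le_right _ _)
    have hint' := hint.mono_set hsub
    have hconst : IntegrableOn (fun _ : ℝ => ε) (Iic (min t 0)) := by
      refine hint'.mono' aestronglyMeasurable_const ?_
      refine (ae_restrict_iff' measurableSet_Iic).2 (ae_of_all _ fun s hs => ?_)
      have := hcon s (le_trans hs (min_le_left _ _))
      rw [Real.norm_eq_abs, abs_of_pos hε]
      exact this
    rw [integrableOn_const_iff (C := ε)] at hconst
    rcases hconst with h | h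
    · exact absurd (enorm_eq_zero.1 h) (ne_of_gt hε)
    · rw [Real.volume_Iic] at h; exact absurd h (by simp)
  -- Step 4: conclude
  have hP : ∀ s : ℝ, ⟪P (w s), w s⟫ ≤ ‖P‖ * ‖w s‖^2 := by
    intro s
    calc ⟪P (w s), w s⟫ ≤ ‖P (w s)‖ * ‖w s‖ := real_inner_le_norm _ _
      _ ≤ (‖P‖ * ‖w s‖) * ‖w s‖ :=
          mul_le_mul_of_nonneg_right (P.le_opNorm _) (norm_nonneg _)
      _ = ‖P‖ * ‖w s‖^2 := by ring
  have hmain : Real.exp (2*ν*t) * ⟪P (w t), w t⟫ ≤ 0 := by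
    refine le_of_forall_pos_le_add fun ε hε => ?_
    have hPpos : (0:ℝ) < ‖P‖ + 1 := by positivity
    obtain ⟨s, hs, hsm⟩ := hsmall (ε / (‖P‖ + 1)) (by positivity)
    have hexp := (Real.exp_pos (2*ν*s)).le
    calc Real.exp (2*ν*t) * ⟪P (w t), w t⟫
        ≤ Real.exp (2*ν*s) * ⟪P (w s), w s⟫ := key s hs
      _ ≤ Real.exp (2*ν*s) * (‖P‖ * ‖w s‖^2) :=
          mul_le_mul_of_nonneg_left (hP s) hexp
      _ ≤ (‖P‖+1) * (Real.exp (2*ν*s) * ‖w s‖^2) := by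
          nlinarith [mul_nonneg hexp (sq_nonneg ‖w s‖), norm_nonneg P]
      _ ≤ (‖P‖+1) * (ε / (‖P‖ + 1)) :=
          mul_le_mul_of_nonneg_left hsm.le hPpos.le
      _ = ε := by field_simp
      _ ≤ 0 + ε := by linarith
  show ⟪P (w t), w t⟫ ≤ 0
  nlinarith [Real.exp_pos (2*ν*t), hmain]
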